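/- arXiv:2511.19698 — 6 statements merged into one kernel-verified Lean document; each statement's English description precedes it below -/
import Mathlib

section
/- For every integer n ≥ 2 and every nonnegative integer k, the number of partitions of n with negative crank and exactly k parts greater than 1 equals the number of partitions of n with positive crank and exactly k+1 parts greater than 1. -/
open scoped Classical

/-- The parts of a partition, sorted in nonincreasing order, so that
`(sortedParts p).getD (i-1) 0` is the `i`-th part `λ_i` (1-indexed). -/
def sortedParts {n : ℕ} (p : n.Partition) : List ℕ :=
  p.parts.sort (· ≥ ·)

/-- The mex of a partition: the smallest positive integer that is not a part. -/
noncomputable def mex {n : ℕ} (p : n.Partition) : ℕ :=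
  sInf {m : ℕ | 0 < m ∧ m ∉ p.parts}

/-- A partition has a fixed point if `λ_i = i` for some index `i`. -/
def hasFixedPoint {n : ℕ} (p : n.Partition) : Prop :=
  ∃ i : ℕ, 0 < i ∧ i ≤ (sortedParts p).length ∧ (sortedParts p).getD (i - 1) 0 = i

/-- `ω(λ)`: the number of parts equal to 1. -/
def omegaStat {n : ℕ} (p : n.Partition) : ℕ := p.parts.count 1

/-- `μ(λ)`: the number of parts greater than `ω(λ)`. -/
def muStat {n : ℕ} (p : n.Partition) : ℕ :=
  (p.parts.filter (fun x => omegaStat p < x)).card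

/-- The crank of a partition. -/
def crank {n : ℕ} (p : n.Partition) : ℤ :=
  if omegaStat p = 0 then (p.parts.sup : ℤ) else (muStat p : ℤ) - (omegaStat p : ℤ)

/-- `β(λ)`: the number of parts greater than 1. -/
def betaStat {n : ℕ} (p : n.Partition) : ℕ :=
  (p.parts.filter (fun x => 1 < x)).card

/-- The Durfee square size: the largest `i` with `λ_i ≥ i` (0 if none). -/
noncomputable def durfee {n : ℕ} (p : n.Partition) : ℕ :=
  sSup {i : ℕ | 0 < i ∧ i ≤ (sortedParts p).length ∧ i ≤ (sortedParts p).getD (i - 1) 0}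


namespace CrankAux

/-- number of elements of `M` that are `≥ i`. -/
def cnt (M : Multiset ℕ) (i : ℕ) : ℕ := (M.filter (fun x => i ≤ x)).card

lemma cnt_anti (M : Multiset ℕ) {i j : ℕ} (h : i ≤ j) : cnt M j ≤ cnt M i :=
  Multiset.card_le_card (Multiset.monotone_filter_right M (fun b hb => le_trans h hb))

lemma cnt_le_card (M : Multiset ℕ) (i : ℕ) : cnt M i ≤ Multiset.card M :=
  Multiset.card_le_card (Multiset.filter_le _ M)

lemma cnt_cons (t : ℕ) (M : Multiset ℕ) (i : ℕ) :
    cnt (t ::ₘ M) i = cnt M i + (if i ≤ t then 1 else 0) := by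
  unfold cnt
  rw [Multiset.filter_cons, Multiset.card_add]
  split <;> simp [add_comm]

lemma cnt_add (M N : Multiset ℕ) (i : ℕ) : cnt (M + N) i = cnt M i + cnt N i := by
  unfold cnt; rw [Multiset.filter_add, Multiset.card_add]

lemma cnt_replicate (m c i : ℕ) :
    cnt (Multiset.replicate m c) i = if i ≤ c then m else 0 := by
  unfold cnt
  split
  · rw [Multiset.filter_eq_self.2 (by intro a ha; rw [Multiset.eq_of_mem_replicate ha]; assumption)]
    simp
  · rw [Multiset.filter_eq_nil.2 (by intro a ha; rw [Multiset.eq_of_mem_replicate ha]; assumption)]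
    simp

lemma cnt_zero (M : Multiset ℕ) : cnt M 0 = Multiset.card M := by
  unfold cnt
  rw [Multiset.filter_eq_self.2 (by intro a _; exact Nat.zero_le a)]

lemma cnt_one (M : Multiset ℕ) (h : ∀ x ∈ M, 1 ≤ x) : cnt M 1 = Multiset.card M := by
  unfold cnt
  rw [Multiset.filter_eq_self.2 h]

lemma cnt_split (M : Multiset ℕ) (s : ℕ) : cnt M s = M.count s + cnt M (s + 1) := by
  unfold cnt
  have h := Multiset.filter_add_filter (fun x => x = s) (fun x => s + 1 ≤ x) M
  have h1 : M.filter (fun x => x = s ∨ s + 1 ≤ x) = M.filter (fun x => s ≤ x) :=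
    Multiset.filter_congr (fun x _ => by omega)
  have h2 : M.filter (fun x => x = s ∧ s + 1 ≤ x) = 0 :=
    Multiset.filter_eq_nil.2 (fun x _ => by omega)
  have h3 : M.filter (fun x => x = s) = Multiset.replicate (M.count s) s := by
    rw [← Multiset.filter_eq M s]
    exact Multiset.filter_congr (fun x _ => ⟨Eq.symm, Eq.symm⟩)
  rw [h1, h2, h3] at h
  have := congrArg Multiset.card h
  simpa [add_comm] using this.symm

lemma cnt_eq_zero_of_sum_lt (M : Multiset ℕ) (i : ℕ) (h : M.sum < i) : cnt M i = 0 := by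
  unfold cnt
  rw [Multiset.filter_eq_nil.2, Multiset.card_zero]
  intro x hx
  have : x ≤ M.sum := Multiset.single_le_sum (fun y _ => Nat.zero_le y) x hx
  omega

lemma mem_of_cnt_lt (M : Multiset ℕ) (s : ℕ) (h : cnt M (s + 1) < cnt M s) : s ∈ M := by
  have := cnt_split M s
  have : 0 < M.count s := by omega
  exact Multiset.count_pos.1 this

lemma cnt_le_of_le {M N : Multiset ℕ} (h : M ≤ N) (i : ℕ) : cnt M i ≤ cnt N i :=
  Multiset.card_le_card (Multiset.filter_le_filter _ h)

/-- Master lemma for downward-closed predicate counts on `Icc 1 N`. -/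
lemma master {N : ℕ} {P : ℕ → Prop} [DecidablePred P]
    (hdc : ∀ i j, 1 ≤ j → j ≤ i → i ≤ N → P i → P j) (i : ℕ) (h1 : 1 ≤ i) (h2 : i ≤ N) :
    P i ↔ i ≤ ((Finset.Icc 1 N).filter P).card := by
  constructor
  · intro hP
    have hsub : Finset.Icc 1 i ⊆ (Finset.Icc 1 N).filter P := by
      intro j hj
      rw [Finset.mem_Icc] at hj
      rw [Finset.mem_filter, Finset.mem_Icc]
      exact ⟨⟨hj.1, le_trans hj.2 h2⟩, hdc i j hj.1 hj.2 h2 hP⟩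
    have := Finset.card_le_card hsub
    rwa [Nat.card_Icc, Nat.add_sub_cancel] at this
  · intro hc
    by_contra hP
    have hsub : (Finset.Icc 1 N).filter P ⊆ Finset.Icc 1 (i - 1) := by
      intro j hj
      rw [Finset.mem_filter, Finset.mem_Icc] at hj
      rw [Finset.mem_Icc]
      refine ⟨hj.1.1, ?_⟩
      by_contra hji
      exact hP (hdc j i h1 (by omega) hj.1.2 hj.2)
    have := Finset.card_le_card hsub
    rw [Nat.card_Icc] at this
    omega

lemma master_card_le {N : ℕ} {P : ℕ → Prop} [DecidablePred P] :
    ((Finset.Icc 1 N).filter P).card ≤ N := by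
  calc ((Finset.Icc 1 N).filter P).card ≤ (Finset.Icc 1 N).card := Finset.card_filter_le _ _
  _ = N := by rw [Nat.card_Icc]; omega

end CrankAux
namespace CrankAux

def eD (ν : Multiset ℕ) : ℕ :=
  ((Finset.Icc 1 (Multiset.card ν)).filter (fun i => i ≤ cnt ν (i + 1))).card

def mD (ν : Multiset ℕ) (ω : ℕ) : ℕ :=
  ((Finset.Icc 1 (eD ν)).filter (fun j => cnt ν (ω - j + 1) + j ≤ eD ν)).card

def DD (ρ : Multiset ℕ) : ℕ :=
  ((Finset.Icc 1 (Multiset.card ρ)).filter (fun i => i ≤ cnt ρ i)).card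

lemma eD_hdc (ν : Multiset ℕ) : ∀ i j, 1 ≤ j → j ≤ i → i ≤ Multiset.card ν →
    i ≤ cnt ν (i + 1) → j ≤ cnt ν (j + 1) := by
  intro i j _ hji _ hP
  exact le_trans (le_trans hji hP) (cnt_anti ν (by omega))

lemma eD_le (ν : Multiset ℕ) : eD ν ≤ Multiset.card ν := master_card_le

lemma eD_iff (ν : Multiset ℕ) (i : ℕ) (h1 : 1 ≤ i) (h2 : i ≤ Multiset.card ν) :
    i ≤ cnt ν (i + 1) ↔ i ≤ eD ν := master (eD_hdc ν) i h1 h2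

lemma eD_ge (ν : Multiset ℕ) (i : ℕ) (h1 : 1 ≤ i) (h2 : i ≤ eD ν) : i ≤ cnt ν (i + 1) :=
  (eD_iff ν i h1 (le_trans h2 (eD_le ν))).2 h2

lemma eD_succ (ν : Multiset ℕ) : cnt ν (eD ν + 2) ≤ eD ν := by
  by_cases h : eD ν + 1 ≤ Multiset.card ν
  · have := (eD_iff ν (eD ν + 1) (by omega) h).not
    have hE : eD ν + 1 + 1 = eD ν + 2 := by omega
    rw [hE] at this
    have h2 : ¬ (eD ν + 1 ≤ cnt ν (eD ν + 2)) := by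
      rw [this]; omega
    omega
  · have := cnt_le_card ν (eD ν + 2)
    omega

lemma eD_anti_ge (ν : Multiset ℕ) (i : ℕ) (h : eD ν + 2 ≤ i) : cnt ν i ≤ eD ν :=
  le_trans (cnt_anti ν h) (eD_succ ν)

lemma DD_hdc (ρ : Multiset ℕ) : ∀ i j, 1 ≤ j → j ≤ i → i ≤ Multiset.card ρ →
    i ≤ cnt ρ i → j ≤ cnt ρ j := by
  intro i j _ hji _ hP
  exact le_trans (le_trans hji hP) (cnt_anti ρ hji)

lemma DD_le (ρ : Multiset ℕ) : DD ρ ≤ Multiset.card ρ := master_card_le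

lemma DD_iff (ρ : Multiset ℕ) (i : ℕ) (h1 : 1 ≤ i) (h2 : i ≤ Multiset.card ρ) :
    i ≤ cnt ρ i ↔ i ≤ DD ρ := master (DD_hdc ρ) i h1 h2

lemma DD_ge (ρ : Multiset ℕ) (i : ℕ) (h1 : 1 ≤ i) (h2 : i ≤ DD ρ) : i ≤ cnt ρ i :=
  (DD_iff ρ i h1 (le_trans h2 (DD_le ρ))).2 h2

lemma DD_succ (ρ : Multiset ℕ) : cnt ρ (DD ρ + 1) ≤ DD ρ := by
  by_cases h : DD ρ + 1 ≤ Multiset.card ρ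
  · have := (DD_iff ρ (DD ρ + 1) (by omega) h).not
    have h2 : ¬ (DD ρ + 1 ≤ cnt ρ (DD ρ + 1)) := by
      rw [this]; omega
    omega
  · have := cnt_le_card ρ (DD ρ + 1)
    omega

lemma mD_hdc (ν : Multiset ℕ) (ω : ℕ) : ∀ i j, 1 ≤ j → j ≤ i → i ≤ eD ν →
    cnt ν (ω - i + 1) + i ≤ eD ν → cnt ν (ω - j + 1) + j ≤ eD ν := by
  intro i j _ hji _ hP
  have : cnt ν (ω - j + 1) ≤ cnt ν (ω - i + 1) := cnt_anti ν (by omega)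
  omega

lemma mD_le (ν : Multiset ℕ) (ω : ℕ) : mD ν ω ≤ eD ν := master_card_le

lemma mD_iff (ν : Multiset ℕ) (ω j : ℕ) (h1 : 1 ≤ j) (h2 : j ≤ eD ν) :
    cnt ν (ω - j + 1) + j ≤ eD ν ↔ j ≤ mD ν ω := master (mD_hdc ν ω) j h1 h2

lemma mD_1 (ν : Multiset ℕ) (ω : ℕ) (h : 1 ≤ mD ν ω) :
    cnt ν (ω - mD ν ω + 1) + mD ν ω ≤ eD ν :=
  (mD_iff ν ω (mD ν ω) h (mD_le ν ω)).2 le_rfl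

lemma mD_2 (ν : Multiset ℕ) (ω : ℕ) (h : mD ν ω + 1 ≤ eD ν) :
    eD ν < cnt ν (ω - (mD ν ω + 1) + 1) + (mD ν ω + 1) := by
  have := (mD_iff ν ω (mD ν ω + 1) (by omega) h).not
  have h2 : ¬ (cnt ν (ω - (mD ν ω + 1) + 1) + (mD ν ω + 1) ≤ eD ν) := by
    rw [this]; omega
  omega

section Aside

variable (ν : Multiset ℕ) (ω : ℕ)

lemma A_omega (hA : cnt ν (ω + 1) < ω) : eD ν + 1 ≤ ω := by
  by_cases he : eD ν = 0
  · omega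
  · by_contra hc
    have h1 : cnt ν (eD ν + 1) ≤ cnt ν (ω + 1) := cnt_anti ν (by omega)
    have h2 : eD ν ≤ cnt ν (eD ν + 1) := eD_ge ν (eD ν) (by omega) le_rfl
    omega

lemma A_s (hA : cnt ν (ω + 1) < ω) : eD ν + 1 ≤ ω - mD ν ω := by
  by_cases hm : mD ν ω = 0
  · rw [hm]; simpa using A_omega ν ω hA
  · by_contra hc
    have he1 : 1 ≤ eD ν := le_trans (by omega) (mD_le ν ω)
    have hω := A_omega ν ω hA
    have hmle := mD_le ν ω
    have c1 : cnt ν (eD ν + 1) ≤ cnt ν (ω - mD ν ω + 1) := cnt_anti ν (by omega)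
    have c2 : eD ν ≤ cnt ν (eD ν + 1) := eD_ge ν (eD ν) he1 le_rfl
    have c3 := mD_1 ν ω (by omega)
    omega

lemma A_guard (hA : cnt ν (ω + 1) < ω) (hω2 : 2 ≤ ω) : mD ν ω + 2 ≤ ω := by
  have h1 := A_s ν ω hA
  have h2 := mD_le ν ω
  omega

lemma Phi_B (hA : cnt ν (ω + 1) < ω) : mD ν ω + 1 ≤ cnt ((ω - mD ν ω) ::ₘ ν) (mD ν ω + 1) := by
  have hs := A_s ν ω hA
  have hml := mD_le ν ω
  rw [cnt_cons]
  rw [if_pos (by omega)]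
  by_cases he : eD ν = 0
  · omega
  · have c2 : eD ν ≤ cnt ν (eD ν + 1) := eD_ge ν (eD ν) (by omega) le_rfl
    have c1 : cnt ν (eD ν + 1) ≤ cnt ν (mD ν ω + 1) := cnt_anti ν (by omega)
    omega

lemma R_D (hA : cnt ν (ω + 1) < ω) : DD ((ω - mD ν ω) ::ₘ ν) = eD ν + 1 := by
  set m := mD ν ω with hm
  set s := ω - m with hsdef
  set ρ := s ::ₘ ν with hρ
  have hK : Multiset.card ρ = Multiset.card ν + 1 := by rw [hρ]; simp
  have hs := A_s ν ω hA
  have hml := mD_le ν ω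
  have hP1 : eD ν + 1 ≤ cnt ρ (eD ν + 1) := by
    rw [hρ, cnt_cons, if_pos (by omega)]
    by_cases he : eD ν = 0
    · omega
    · have := eD_ge ν (eD ν) (by omega) le_rfl
      omega
  have hge : eD ν + 1 ≤ DD ρ :=
    (DD_iff ρ (eD ν + 1) (by omega) (by rw [hK]; have := eD_le ν; omega)).1 hP1
  have hle : DD ρ ≤ eD ν + 1 := by
    by_contra hc
    have h2 : eD ν + 2 ≤ cnt ρ (eD ν + 2) :=
      DD_ge ρ (eD ν + 2) (by omega) (by omega)
    have h3 : cnt ρ (eD ν + 2) ≤ cnt ν (eD ν + 2) + 1 := by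
      rw [hρ, cnt_cons]; split <;> omega
    have h4 := eD_succ ν
    omega
  omega

lemma R_s1 (hA : cnt ν (ω + 1) < ω) :
    eD ν + 1 ≤ cnt ((ω - mD ν ω) ::ₘ ν) (ω - mD ν ω) + mD ν ω := by
  set m := mD ν ω with hm
  rw [cnt_cons, if_pos le_rfl]
  by_cases hme : m = eD ν
  · omega
  · have hml := mD_le ν ω
    have h2 := mD_2 ν ω (by omega)
    have hg := A_guard ν ω hA (by have := A_omega ν ω hA; have := mD_le ν ω; omega)
    have : ω - (m + 1) + 1 = ω - m := by omega
    rw [this] at h2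
    omega

lemma R_s2 (hA : cnt ν (ω + 1) < ω) :
    cnt ((ω - mD ν ω) ::ₘ ν) (ω - mD ν ω + 1) + mD ν ω ≤ eD ν := by
  set m := mD ν ω with hm
  rw [cnt_cons, if_neg (by omega)]
  by_cases hm0 : m = 0
  · rw [hm0]
    have hω := A_omega ν ω hA
    have : cnt ν (ω - 0 + 1) ≤ eD ν := by
      have : ω - 0 + 1 = ω + 1 := by omega
      rw [this]
      exact eD_anti_ge ν (ω + 1) (by omega)
    omega
  · have h1 := mD_1 ν ω (by omega)
    rw [← hm] at h1
    omega

end Aside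

end CrankAux
namespace CrankAux

lemma cnt_erase (ρ : Multiset ℕ) (s : ℕ) (hs : s ∈ ρ) (i : ℕ) :
    cnt ρ i = cnt (ρ.erase s) i + (if i ≤ s then 1 else 0) := by
  conv_lhs => rw [← Multiset.cons_erase hs]
  rw [cnt_cons]

section Bside

variable (ρ : Multiset ℕ) (w : ℕ)

lemma B_Dw (hB : w + 1 ≤ cnt ρ (w + 1)) : w + 1 ≤ DD ρ :=
  (DD_iff ρ (w + 1) (by omega) (le_trans hB (cnt_le_card ρ _))).1 hB

lemma B_exists (hB : w + 1 ≤ cnt ρ (w + 1)) :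
    ∃ s, s ∈ ρ ∧ DD ρ ≤ cnt ρ s + w ∧ cnt ρ (s + 1) + w + 1 ≤ DD ρ := by
  have hDw := B_Dw ρ w hB
  have hne : ((Finset.Icc 0 ρ.sum).filter (fun x => DD ρ ≤ cnt ρ x + w)).Nonempty := by
    refine ⟨0, ?_⟩
    rw [Finset.mem_filter, Finset.mem_Icc]
    refine ⟨⟨le_rfl, Nat.zero_le _⟩, ?_⟩
    rw [cnt_zero]
    have := DD_le ρ
    omega
  set s := ((Finset.Icc 0 ρ.sum).filter (fun x => DD ρ ≤ cnt ρ x + w)).max' hne with hsdef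
  have hs_mem := Finset.max'_mem _ hne
  rw [Finset.mem_filter, Finset.mem_Icc] at hs_mem
  have hs2 : DD ρ ≤ cnt ρ s + w := hs_mem.2
  have hs3 : cnt ρ (s + 1) + w + 1 ≤ DD ρ := by
    by_cases hsum : s + 1 ≤ ρ.sum
    · by_contra hc
      have hmem : s + 1 ∈ (Finset.Icc 0 ρ.sum).filter (fun x => DD ρ ≤ cnt ρ x + w) := by
        rw [Finset.mem_filter, Finset.mem_Icc]
        exact ⟨⟨Nat.zero_le _, hsum⟩, by omega⟩
      have := Finset.le_max' _ _ hmem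
      omega
    · have : cnt ρ (s + 1) = 0 := cnt_eq_zero_of_sum_lt ρ (s + 1) (by omega)
      omega
  refine ⟨s, ?_, hs2, hs3⟩
  exact mem_of_cnt_lt ρ s (by omega)

variable (s : ℕ)

lemma B_sD (hs2 : DD ρ ≤ cnt ρ s + w) (hs3 : cnt ρ (s + 1) + w + 1 ≤ DD ρ) : DD ρ ≤ s := by
  by_contra hc
  have hD1 : 1 ≤ DD ρ := by omega
  have : DD ρ ≤ cnt ρ (DD ρ) := DD_ge ρ (DD ρ) hD1 le_rfl
  have : cnt ρ (DD ρ) ≤ cnt ρ (s + 1) := cnt_anti ρ (by omega)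
  omega

lemma Psi_A (hs1 : s ∈ ρ) (hs2 : DD ρ ≤ cnt ρ s + w) (hs3 : cnt ρ (s + 1) + w + 1 ≤ DD ρ) :
    cnt (ρ.erase s) (s + w + 1) < s + w := by
  have hsD := B_sD ρ w s hs2 hs3
  have h1 : cnt (ρ.erase s) (s + w + 1) ≤ cnt ρ (s + w + 1) :=
    cnt_le_of_le (Multiset.erase_le s ρ) _
  have h2 : cnt ρ (s + w + 1) ≤ cnt ρ (s + 1) := cnt_anti ρ (by omega)
  omega

lemma Psi_e (hs1 : s ∈ ρ) (hs2 : DD ρ ≤ cnt ρ s + w) (hs3 : cnt ρ (s + 1) + w + 1 ≤ DD ρ) :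
    eD (ρ.erase s) + 1 = DD ρ := by
  have hsD := B_sD ρ w s hs2 hs3
  have hcons : s ::ₘ ρ.erase s = ρ := Multiset.cons_erase hs1
  have hcard : Multiset.card ρ = Multiset.card (ρ.erase s) + 1 := by
    rw [← hcons]; simp
  have hD1 : 1 ≤ DD ρ := by omega
  have hge : DD ρ ≤ eD (ρ.erase s) + 1 := by
    by_cases hD2 : 2 ≤ DD ρ
    · have hcntD : DD ρ ≤ cnt ρ (DD ρ) := DD_ge ρ (DD ρ) hD1 le_rfl
      have hrw : cnt ρ (DD ρ) = cnt (ρ.erase s) (DD ρ) + 1 := by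
        rw [cnt_erase ρ s hs1 (DD ρ), if_pos (by omega)]
      have hP : DD ρ - 1 ≤ cnt (ρ.erase s) (DD ρ - 1 + 1) := by
        have : DD ρ - 1 + 1 = DD ρ := by omega
        rw [this]; omega
      have := (eD_iff (ρ.erase s) (DD ρ - 1) (by omega)
        (by have := DD_le ρ; omega)).1 hP
      omega
    · omega
  have hle : eD (ρ.erase s) + 1 ≤ DD ρ := by
    by_contra hc
    have heP : DD ρ ≤ cnt (ρ.erase s) (DD ρ + 1) :=
      eD_ge (ρ.erase s) (DD ρ) hD1 (by omega)
    have hDs := DD_succ ρ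
    by_cases hss : DD ρ + 1 ≤ s
    · have : cnt ρ (DD ρ + 1) = cnt (ρ.erase s) (DD ρ + 1) + 1 := by
        rw [cnt_erase ρ s hs1 (DD ρ + 1), if_pos hss]
      omega
    · have hseq : s = DD ρ := by omega
      have : cnt ρ (DD ρ + 1) = cnt (ρ.erase s) (DD ρ + 1) := by
        rw [cnt_erase ρ s hs1 (DD ρ + 1), if_neg (by omega)]
        omega
      rw [hseq] at hs3
      omega
  omega

lemma Psi_m (hs1 : s ∈ ρ) (hs2 : DD ρ ≤ cnt ρ s + w) (hs3 : cnt ρ (s + 1) + w + 1 ≤ DD ρ)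
    (hs2' : 2 ≤ s) :
    mD (ρ.erase s) (s + w) = w := by
  have hsD := B_sD ρ w s hs2 hs3
  have he := Psi_e ρ w s hs1 hs2 hs3
  have hwe : w ≤ eD (ρ.erase s) := by omega
  have hcnts : cnt ρ s = cnt (ρ.erase s) s + 1 := by
    rw [cnt_erase ρ s hs1 s, if_pos le_rfl]
  have hcnts1 : cnt ρ (s + 1) = cnt (ρ.erase s) (s + 1) := by
    rw [cnt_erase ρ s hs1 (s + 1), if_neg (by omega)]
    omega
  have hge : w ≤ mD (ρ.erase s) (s + w) := by
    by_cases hw0 : w = 0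
    · omega
    · have hP : cnt (ρ.erase s) (s + w - w + 1) + w ≤ eD (ρ.erase s) := by
        have hssw : s + w - w + 1 = s + 1 := by omega
        rw [hssw]
        omega
      exact (mD_iff (ρ.erase s) (s + w) w (by omega) hwe).1 hP
  have hle : mD (ρ.erase s) (s + w) ≤ w := by
    by_contra hc
    have hwe1 : w + 1 ≤ eD (ρ.erase s) := le_trans (by omega) (mD_le (ρ.erase s) (s + w))
    have hP : cnt (ρ.erase s) (s + w - (w + 1) + 1) + (w + 1) ≤ eD (ρ.erase s) :=
      (mD_iff (ρ.erase s) (s + w) (w + 1) (by omega) hwe1).2 (by omega)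
    have hsw : s + w - (w + 1) + 1 = s := by omega
    rw [hsw] at hP
    omega
  omega

end Bside

end CrankAux
namespace CrankAux

variable {n : ℕ}

def bigsP (p : n.Partition) : Multiset ℕ := p.parts.filter (fun x => 1 < x)

lemma bigs_mem (p : n.Partition) : ∀ x ∈ bigsP p, 1 < x :=
  fun _ hx => (Multiset.mem_filter.1 hx).2

lemma betaStat_eq (p : n.Partition) : betaStat p = Multiset.card (bigsP p) := rfl

lemma parts_decomp (p : n.Partition) :
    p.parts = bigsP p + Multiset.replicate (omegaStat p) 1 := by
  have h := Multiset.filter_add_not (fun x => 1 < x) p.parts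
  have h2 : p.parts.filter (fun x => ¬ 1 < x) = Multiset.replicate (omegaStat p) 1 := by
    have h3 : p.parts.filter (fun x => ¬ 1 < x) = p.parts.filter (fun x => 1 = x) := by
      apply Multiset.filter_congr
      intro x hx
      have := p.parts_pos hx
      constructor <;> (intro; omega)
    rw [h3]
    exact Multiset.filter_eq p.parts 1
  rw [← h, h2]
  rfl

lemma sum_decomp (p : n.Partition) : (bigsP p).sum + omegaStat p = n := by
  have hs := p.parts_sum
  rw [parts_decomp p, Multiset.sum_add, Multiset.sum_replicate, smul_eq_mul, mul_one] at hs
  exact hs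

lemma count_one_bigs (p : n.Partition) : (bigsP p).count 1 = 0 :=
  Multiset.count_eq_zero.2 (fun h => by have := bigs_mem p 1 h; omega)

lemma cnt_two_bigs (p : n.Partition) : cnt (bigsP p) 2 = Multiset.card (bigsP p) :=
  cnt_one' where
  cnt_one' := by
    unfold cnt
    rw [Multiset.filter_eq_self.2 (fun x hx => by have := bigs_mem p x hx; omega)]

lemma muStat_eq (p : n.Partition) : muStat p = cnt (bigsP p) (omegaStat p + 1) := by
  unfold muStat cnt bigsP
  rw [Multiset.filter_filter]
  apply congrArg
  apply Multiset.filter_congr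
  intro x hx
  have hpos := p.parts_pos hx
  constructor
  · intro hx2
    refine ⟨by omega, ?_⟩
    by_cases hw : omegaStat p = 0
    · have h1 : (1 : ℕ) ∉ p.parts := Multiset.count_eq_zero.1 hw
      have : x ≠ 1 := fun he => h1 (he ▸ hx)
      omega
    · omega
  · intro hx2; omega

lemma crank_neg_iff (p : n.Partition) :
    crank p < 0 ↔ cnt (bigsP p) (omegaStat p + 1) < omegaStat p := by
  unfold crank
  by_cases h : omegaStat p = 0
  · rw [if_pos h]
    refine iff_of_false ?_ (by rw [h]; omega)
    have := Int.natCast_nonneg p.parts.sup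
    omega
  · rw [if_neg h, muStat_eq p]
    omega

lemma crank_pos_iff (p : n.Partition) (hn : n ≠ 0) :
    0 < crank p ↔ omegaStat p + 1 ≤ cnt (bigsP p) (omegaStat p + 1) := by
  unfold crank
  by_cases h : omegaStat p = 0
  · rw [if_pos h]
    refine iff_of_true ?_ ?_
    · have hne : p.parts ≠ 0 := by
        intro he
        apply hn
        rw [← p.parts_sum, he]
        rfl
      obtain ⟨x, hx⟩ := Multiset.exists_mem_of_ne_zero hne
      have h1 := p.parts_pos hx
      have h2 := Multiset.le_sup hx
      have : (0 : ℤ) < (p.parts.sup : ℤ) := by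
        have : 1 ≤ p.parts.sup := le_trans h1 h2
        omega
      exact this
    · have hall : ∀ x ∈ p.parts, 1 < x := by
        intro x hx
        have h1 := p.parts_pos hx
        rcases Nat.lt_or_ge 1 x with h' | h'
        · exact h'
        · exfalso
          have hx1 : x = 1 := by omega
          have : p.parts.count 1 ≠ 0 := by
            rw [← hx1] at *
            exact Multiset.count_ne_zero.2 hx
          exact this h
      have hbig : bigsP p = p.parts := Multiset.filter_eq_self.2 hall
      have hne : p.parts ≠ 0 := by
        intro he
        apply hn
        rw [← p.parts_sum, he]
        rfl
      have : 1 ≤ Multiset.card (bigsP p) := by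
        rw [hbig]
        have := Multiset.card_pos.2 hne
        omega
      have h1 : cnt (bigsP p) 1 = Multiset.card (bigsP p) :=
        cnt_one (bigsP p) (fun x hx => by have := bigs_mem p x hx; omega)
      have h2 : cnt (bigsP p) (omegaStat p + 1) = cnt (bigsP p) 1 := by rw [h]
      omega
  · rw [if_neg h, muStat_eq p]
    omega

lemma A_two (p : n.Partition) (hn : 2 ≤ n)
    (hA : cnt (bigsP p) (omegaStat p + 1) < omegaStat p) : 2 ≤ omegaStat p := by
  by_contra hc
  have h1 : omegaStat p = 1 := by omega
  have h1' : cnt (bigsP p) (omegaStat p + 1) = cnt (bigsP p) 2 := by rw [h1]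
  rw [h1'] at hA
  rw [h1] at hA
  have h2 := cnt_two_bigs p
  have h3 : Multiset.card (bigsP p) = 0 := by omega
  have h4 : bigsP p = 0 := Multiset.card_eq_zero.1 h3
  have h5 := sum_decomp p
  rw [h4, h1] at h5
  simp at h5
  omega

end CrankAux
namespace CrankAux

variable {n : ℕ}

def phiF (p : n.Partition) : n.Partition :=
  if h : mD (bigsP p) (omegaStat p) + 2 ≤ omegaStat p then
    { parts := (omegaStat p - mD (bigsP p) (omegaStat p)) ::ₘ
        (bigsP p + Multiset.replicate (mD (bigsP p) (omegaStat p)) 1)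
      parts_pos := by
        intro i hi
        rw [Multiset.mem_cons] at hi
        rcases hi with h1 | h1
        · omega
        · rw [Multiset.mem_add] at h1
          rcases h1 with h2 | h2
          · have := bigs_mem p i h2; omega
          · rw [Multiset.eq_of_mem_replicate h2]; omega
      parts_sum := by
        rw [Multiset.sum_cons, Multiset.sum_add, Multiset.sum_replicate, smul_eq_mul, mul_one]
        have hd := sum_decomp p
        omega }
  else p

lemma phiF_parts (p : n.Partition) (h : mD (bigsP p) (omegaStat p) + 2 ≤ omegaStat p) :
    (phiF p).parts = (omegaStat p - mD (bigsP p) (omegaStat p)) ::ₘ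
      (bigsP p + Multiset.replicate (mD (bigsP p) (omegaStat p)) 1) := by
  unfold phiF
  rw [dif_pos h]

lemma phiF_omega (p : n.Partition) (h : mD (bigsP p) (omegaStat p) + 2 ≤ omegaStat p) :
    omegaStat (phiF p) = mD (bigsP p) (omegaStat p) := by
  show (phiF p).parts.count 1 = _
  rw [phiF_parts p h, Multiset.count_cons_of_ne (by omega), Multiset.count_add,
    count_one_bigs p, Multiset.count_replicate_self]
  omega

lemma phiF_bigs (p : n.Partition) (h : mD (bigsP p) (omegaStat p) + 2 ≤ omegaStat p) :
    bigsP (phiF p) = (omegaStat p - mD (bigsP p) (omegaStat p)) ::ₘ bigsP p := by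
  show (phiF p).parts.filter (fun x => 1 < x) = _
  rw [phiF_parts p h, Multiset.filter_cons, if_pos (by omega : (1:ℕ) <
      omegaStat p - mD (bigsP p) (omegaStat p)), Multiset.filter_add,
    Multiset.filter_eq_self.2 (bigs_mem p),
    Multiset.filter_eq_nil.2 (fun x hx => by rw [Multiset.eq_of_mem_replicate hx]; omega)]
  simp [Multiset.singleton_add]

lemma phi_mapsTo (hn : 2 ≤ n) (k : ℕ) :
    Set.MapsTo phiF {p : n.Partition | crank p < 0 ∧ betaStat p = k}
      {p : n.Partition | 0 < crank p ∧ betaStat p = k + 1} := by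
  intro p hp
  obtain ⟨hc, hk⟩ := hp
  rw [crank_neg_iff] at hc
  have hω2 := A_two p hn hc
  have hguard := A_guard (bigsP p) (omegaStat p) hc hω2
  constructor
  · rw [crank_pos_iff _ (by omega), phiF_omega p hguard, phiF_bigs p hguard]
    exact Phi_B (bigsP p) (omegaStat p) hc
  · rw [betaStat_eq, phiF_bigs p hguard, Multiset.card_cons]
    rw [betaStat_eq] at hk
    omega

lemma phi_injOn (hn : 2 ≤ n) (k : ℕ) :
    Set.InjOn phiF {p : n.Partition | crank p < 0 ∧ betaStat p = k} := by
  intro p hp q hq heq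
  obtain ⟨hcp, _⟩ := hp
  obtain ⟨hcq, _⟩ := hq
  rw [crank_neg_iff] at hcp hcq
  have hωp := A_two p hn hcp
  have hωq := A_two q hn hcq
  have hgp := A_guard (bigsP p) (omegaStat p) hcp hωp
  have hgq := A_guard (bigsP q) (omegaStat q) hcq hωq
  have hm : mD (bigsP p) (omegaStat p) = mD (bigsP q) (omegaStat q) := by
    have h1 := phiF_omega p hgp
    have h2 := phiF_omega q hgq
    rw [heq] at h1
    omega
  have hbig : (omegaStat p - mD (bigsP p) (omegaStat p)) ::ₘ bigsP p
      = (omegaStat q - mD (bigsP q) (omegaStat q)) ::ₘ bigsP q := by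
    have h1 := phiF_bigs p hgp
    have h2 := phiF_bigs q hgq
    rw [heq] at h1
    exact h1.symm.trans h2
  have hDp := R_D (bigsP p) (omegaStat p) hcp
  have hDq := R_D (bigsP q) (omegaStat q) hcq
  rw [← hbig] at hDq
  have h1p := R_s1 (bigsP p) (omegaStat p) hcp
  have h2p := R_s2 (bigsP p) (omegaStat p) hcp
  have h1q := R_s1 (bigsP q) (omegaStat q) hcq
  have h2q := R_s2 (bigsP q) (omegaStat q) hcq
  rw [← hbig] at h1q h2q
  have hss : omegaStat p - mD (bigsP p) (omegaStat p)
      = omegaStat q - mD (bigsP q) (omegaStat q) := by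
    rcases lt_trichotomy (omegaStat p - mD (bigsP p) (omegaStat p))
      (omegaStat q - mD (bigsP q) (omegaStat q)) with hlt | heq' | hgt
    · exfalso
      have hanti : cnt ((omegaStat p - mD (bigsP p) (omegaStat p)) ::ₘ bigsP p)
          (omegaStat q - mD (bigsP q) (omegaStat q))
          ≤ cnt ((omegaStat p - mD (bigsP p) (omegaStat p)) ::ₘ bigsP p)
          (omegaStat p - mD (bigsP p) (omegaStat p) + 1) := cnt_anti _ (by omega)
      omega
    · exact heq'
    · exfalso
      have hanti : cnt ((omegaStat p - mD (bigsP p) (omegaStat p)) ::ₘ bigsP p)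
          (omegaStat p - mD (bigsP p) (omegaStat p))
          ≤ cnt ((omegaStat p - mD (bigsP p) (omegaStat p)) ::ₘ bigsP p)
          (omegaStat q - mD (bigsP q) (omegaStat q) + 1) := cnt_anti _ (by omega)
      omega
  have hω : omegaStat p = omegaStat q := by omega
  have hν : bigsP p = bigsP q := by
    rw [hss] at hbig
    exact (Multiset.cons_inj_right _).1 hbig
  apply Nat.Partition.ext
  rw [parts_decomp p, parts_decomp q, hν, hω]

lemma phi_surjOn (hn : 2 ≤ n) (k : ℕ) :
    Set.SurjOn phiF {p : n.Partition | crank p < 0 ∧ betaStat p = k}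
      {p : n.Partition | 0 < crank p ∧ betaStat p = k + 1} := by
  intro q hq
  obtain ⟨hcq, hkq⟩ := hq
  rw [crank_pos_iff _ (by omega)] at hcq
  obtain ⟨s, hs1, hs2, hs3⟩ := B_exists (bigsP q) (omegaStat q) hcq
  have hs2' : 2 ≤ s := by have := bigs_mem q s hs1; omega
  have hsum' : ((bigsP q).erase s).sum + s = (bigsP q).sum := by
    conv_rhs => rw [← Multiset.cons_erase hs1]
    rw [Multiset.sum_cons]
    omega
  refine ⟨⟨((bigsP q).erase s) + Multiset.replicate (s + omegaStat q) 1, ?_, ?_⟩, ?_, ?_⟩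
  · intro i hi
    rw [Multiset.mem_add] at hi
    rcases hi with h2 | h2
    · have := bigs_mem q i (Multiset.mem_of_mem_erase h2); omega
    · rw [Multiset.eq_of_mem_replicate h2]; omega
  · rw [Multiset.sum_add, Multiset.sum_replicate, smul_eq_mul, mul_one]
    have hd := sum_decomp q
    omega
  · -- membership in A
    set p0 : n.Partition := ⟨((bigsP q).erase s) + Multiset.replicate (s + omegaStat q) 1, _, _⟩
      with hp0
    have homega : omegaStat p0 = s + omegaStat q := by
      show p0.parts.count 1 = _
      rw [hp0]
      show (((bigsP q).erase s) + Multiset.replicate (s + omegaStat q) 1).count 1 = _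
      rw [Multiset.count_add, Multiset.count_replicate_self]
      have h0 : ((bigsP q).erase s).count 1 = 0 := by
        have := Multiset.count_le_of_le 1 (Multiset.erase_le s (bigsP q))
        have := count_one_bigs q
        omega
      omega
    have hbigs : bigsP p0 = (bigsP q).erase s := by
      show p0.parts.filter (fun x => 1 < x) = _
      rw [hp0]
      show (((bigsP q).erase s) + Multiset.replicate (s + omegaStat q) 1).filter
        (fun x => 1 < x) = _
      rw [Multiset.filter_add,
        Multiset.filter_eq_self.2
          (fun x hx => bigs_mem q x (Multiset.mem_of_mem_erase hx)),
        Multiset.filter_eq_nil.2 (fun x hx => by rw [Multiset.eq_of_mem_replicate hx]; omega)]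
      simp
    constructor
    · rw [crank_neg_iff, homega, hbigs]
      exact Psi_A (bigsP q) (omegaStat q) s hs1 hs2 hs3
    · rw [betaStat_eq, hbigs, Multiset.card_erase_of_mem hs1, Nat.pred_eq_sub_one]
      rw [betaStat_eq] at hkq
      omega
  · -- phiF p0 = q
    set p0 : n.Partition := ⟨((bigsP q).erase s) + Multiset.replicate (s + omegaStat q) 1, _, _⟩
      with hp0
    have homega : omegaStat p0 = s + omegaStat q := by
      show p0.parts.count 1 = _
      rw [hp0]
      show (((bigsP q).erase s) + Multiset.replicate (s + omegaStat q) 1).count 1 = _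
      rw [Multiset.count_add, Multiset.count_replicate_self]
      have h0 : ((bigsP q).erase s).count 1 = 0 := by
        have := Multiset.count_le_of_le 1 (Multiset.erase_le s (bigsP q))
        have := count_one_bigs q
        omega
      omega
    have hbigs : bigsP p0 = (bigsP q).erase s := by
      show p0.parts.filter (fun x => 1 < x) = _
      rw [hp0]
      show (((bigsP q).erase s) + Multiset.replicate (s + omegaStat q) 1).filter
        (fun x => 1 < x) = _
      rw [Multiset.filter_add,
        Multiset.filter_eq_self.2
          (fun x hx => bigs_mem q x (Multiset.mem_of_mem_erase hx)),
        Multiset.filter_eq_nil.2 (fun x hx => by rw [Multiset.eq_of_mem_replicate hx]; omega)]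
      simp
    have hmval' : mD ((bigsP q).erase s) (s + omegaStat q) = omegaStat q :=
      Psi_m (bigsP q) (omegaStat q) s hs1 hs2 hs3 hs2'
    have hmval : mD (bigsP p0) (omegaStat p0) = omegaStat q := by
      rw [hbigs, homega]
      exact hmval'
    have hguard : mD (bigsP p0) (omegaStat p0) + 2 ≤ omegaStat p0 := by
      rw [hmval, homega]
      omega
    apply Nat.Partition.ext
    rw [phiF_parts p0 hguard, hbigs, homega, hmval']
    have hsw : s + omegaStat q - omegaStat q = s := by omega
    rw [hsw]
    conv_rhs => rw [parts_decomp q]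
    rw [← Multiset.cons_add, Multiset.cons_erase hs1]

end CrankAux

theorem neg_crank_eq_pos_crank_refined (n k : ℕ) (hn : 2 ≤ n) :
    {p : Nat.Partition n | crank p < 0 ∧ betaStat p = k}.ncard = {p : Nat.Partition n | 0 < crank p ∧ betaStat p = k + 1}.ncard := by
  have hbij : Set.BijOn CrankAux.phiF {p : Nat.Partition n | crank p < 0 ∧ betaStat p = k}
      {p : Nat.Partition n | 0 < crank p ∧ betaStat p = k + 1} :=
    ⟨CrankAux.phi_mapsTo hn k, CrankAux.phi_injOn hn k, CrankAux.phi_surjOn hn k⟩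
  rw [← hbij.image_eq, Set.ncard_image_of_injOn hbij.injOn]
end

section
/- For all positive integers n and k, the number of partitions of n with a fixed point and exactly k+1 parts greater than 1 equals the number of partitions of n with negative crank and exactly k parts greater than 1. -/
open scoped Classical

/-! ### Auxiliary development -/

namespace FPNC

/-- `Fc p j` : the number of parts of `p` that are at least `j`. -/
noncomputable def Fc {n : ℕ} (p : n.Partition) (j : ℕ) : ℕ :=
  Multiset.countP (fun x => j ≤ x) p.parts

lemma Fc_anti {n : ℕ} (p : n.Partition) {j j' : ℕ} (h : j ≤ j') : Fc p j' ≤ Fc p j := by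
  unfold Fc
  rw [Multiset.countP_eq_card_filter, Multiset.countP_eq_card_filter]
  exact Multiset.card_le_card (Multiset.monotone_filter_right _ (fun x hx => le_trans h hx))

lemma Fc_le_card {n : ℕ} (p : n.Partition) (j : ℕ) : Fc p j ≤ Multiset.card p.parts :=
  Multiset.countP_le_card _ _

lemma countP_nat_split (s : Multiset ℕ) (d : ℕ) :
    Multiset.countP (fun x => d ≤ x) s
      = Multiset.count d s + Multiset.countP (fun x => d + 1 ≤ x) s := by
  induction s using Multiset.induction with
  | empty => simp
  | cons a s ih =>
    rw [Multiset.countP_cons, Multiset.countP_cons, Multiset.count_cons, ih]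
    split_ifs <;> omega

lemma betaStat_eq_Fc {n : ℕ} (p : n.Partition) : betaStat p = Fc p 2 := by
  unfold betaStat Fc
  rw [← Multiset.countP_eq_card_filter]
  exact Multiset.countP_congr rfl (fun x _ => by constructor <;> (intro h; omega))

lemma muStat_eq_Fc {n : ℕ} (p : n.Partition) : muStat p = Fc p (omegaStat p + 1) := by
  unfold muStat Fc
  rw [← Multiset.countP_eq_card_filter]
  exact Multiset.countP_congr rfl (fun x _ => by constructor <;> (intro h; omega))

lemma crank_neg_iff {n : ℕ} (p : n.Partition) :
    crank p < 0 ↔ 0 < omegaStat p ∧ muStat p < omegaStat p := by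
  unfold crank
  split_ifs with h
  · simp only [h]
    constructor
    · intro hc
      have : (0:ℤ) ≤ (p.parts.sup : ℤ) := Int.natCast_nonneg _
      omega
    · rintro ⟨h0, _⟩; omega
  · constructor
    · intro hc; exact ⟨Nat.pos_of_ne_zero h, by omega⟩
    · rintro ⟨_, h2⟩
      have : (muStat p : ℤ) < (omegaStat p : ℤ) := by exact_mod_cast h2
      omega

/-! ### Sorted list counting lemmas -/

lemma count_ge_of_sorted (l : List ℕ) (hl : l.Pairwise (· ≥ ·)) {j v : ℕ}
    (hj : j < l.length) (hv : v ≤ l[j]) :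
    j + 1 ≤ Multiset.countP (fun x => v ≤ x) (l : Multiset ℕ) := by
  have hdec : (l : Multiset ℕ) = (↑(l.take (j+1)) : Multiset ℕ) + ↑(l.drop (j+1)) := by
    rw [Multiset.coe_add, List.take_append_drop]
  have hall : ∀ a ∈ l.take (j+1), v ≤ a := by
    intro a ha
    obtain ⟨m, hm, rfl⟩ := List.mem_iff_getElem.mp ha
    have hmlen : m < l.length := lt_of_lt_of_le hm (by simp [List.length_take])
    rw [List.getElem_take]
    have hmj : m ≤ j := by
      have := hm; simp only [List.length_take] at this; omega
    rcases eq_or_lt_of_le hmj with rfl | hlt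
    · exact hv
    · exact le_trans hv (List.pairwise_iff_getElem.mp hl m j hmlen hj hlt)
  have htake : Multiset.countP (fun x => v ≤ x) (↑(l.take (j+1)) : Multiset ℕ)
      = (l.take (j+1)).length := by
    rw [← Multiset.coe_card]
    exact Multiset.countP_eq_card.mpr hall
  have hlen : (l.take (j+1)).length = j + 1 := by
    simp [List.length_take]; omega
  rw [hdec, Multiset.countP_add, htake, hlen]
  omega

lemma count_le_of_sorted (l : List ℕ) (hl : l.Pairwise (· ≥ ·)) {j v : ℕ}
    (hj : j < l.length) (hv : l[j] < v) :
    Multiset.countP (fun x => v ≤ x) (l : Multiset ℕ) ≤ j := by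
  have hdec : (l : Multiset ℕ) = (↑(l.take j) : Multiset ℕ) + ↑(l.drop j) := by
    rw [Multiset.coe_add, List.take_append_drop]
  have hnone : ∀ a ∈ l.drop j, ¬ (v ≤ a) := by
    intro a ha
    obtain ⟨m, hm, rfl⟩ := List.mem_iff_getElem.mp ha
    rw [List.getElem_drop]
    have hmlen : j + m < l.length := by
      have := hm; simp only [List.length_drop] at this; omega
    rcases Nat.eq_zero_or_pos m with rfl | hmpos
    · simp only [Nat.add_zero]; omega
    · have := List.pairwise_iff_getElem.mp hl j (j + m) hj hmlen (by omega)
      omega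
  have hdrop : Multiset.countP (fun x => v ≤ x) (↑(l.drop j) : Multiset ℕ) = 0 :=
    Multiset.countP_eq_zero.mpr hnone
  have htake : Multiset.countP (fun x => v ≤ x) (↑(l.take j) : Multiset ℕ) ≤ j := by
    calc Multiset.countP (fun x => v ≤ x) (↑(l.take j) : Multiset ℕ)
        ≤ Multiset.card (↑(l.take j) : Multiset ℕ) := Multiset.countP_le_card _ _
      _ ≤ j := by rw [Multiset.coe_card]; simp [List.length_take]
  rw [hdec, Multiset.countP_add, hdrop]
  omega

lemma hasFixedPoint_iff {n : ℕ} (p : n.Partition) :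
    hasFixedPoint p ↔ ∃ d, 0 < d ∧ d ≤ Fc p d ∧ Fc p (d + 1) < d := by
  set l := sortedParts p with hldef
  have hl : l.Pairwise (· ≥ ·) := Multiset.pairwise_sort _ _
  have hco : (l : Multiset ℕ) = p.parts := Multiset.sort_eq _ _
  have hlen : l.length = Multiset.card p.parts := Multiset.length_sort _
  have hFc : ∀ j, Fc p j = Multiset.countP (fun x => j ≤ x) (l : Multiset ℕ) := by
    intro j; rw [hco]; rfl
  constructor
  · rintro ⟨i, hi, hil, hfix⟩
    rw [← hldef] at hil hfix
    have hj : i - 1 < l.length := by omega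
    have hget : l[i-1] = i := by rw [← List.getD_eq_getElem l 0 hj]; exact hfix
    refine ⟨i, hi, ?_, ?_⟩
    · rw [hFc]
      have := count_ge_of_sorted l hl hj (le_of_eq hget.symm)
      omega
    · rw [hFc]
      have := count_le_of_sorted l hl hj (v := i + 1) (by omega)
      omega
  · rintro ⟨d, hd, h1, h2⟩
    have hdlen : d ≤ l.length := by
      have := Fc_le_card p d; omega
    have hj : d - 1 < l.length := by omega
    refine ⟨d, hd, ?_, ?_⟩
    · rw [← hldef]; exact hdlen
    rw [← hldef, List.getD_eq_getElem l 0 hj]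
    by_contra hne
    rcases Nat.lt_or_ge l[d-1] d with hlt | hge
    · have := count_le_of_sorted l hl hj hlt
      rw [hFc] at h1; omega
    · have hgt : d + 1 ≤ l[d-1] := by omega
      have := count_ge_of_sorted l hl hj hgt
      rw [hFc] at h2; omega

/-! ### The `d`-statistics and their uniqueness -/

/-- The defining property of the distinguished index on the crank side. -/
def DB {n : ℕ} (p : n.Partition) (d : ℕ) : Prop :=
  0 < d ∧ d - 1 ≤ Fc p d ∧ Fc p (d + 1) < d

/-- The defining property of the distinguished index on the fixed-point side. -/
def DA {n : ℕ} (p : n.Partition) (d : ℕ) : Prop :=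
  0 < d ∧ d ≤ Fc p d ∧ Fc p (d + 1) < d

lemma DA.toDB {n : ℕ} {p : n.Partition} {d : ℕ} (h : DA p d) : DB p d :=
  ⟨h.1, by have := h.2.1; omega, h.2.2⟩

lemma DB_unique {n : ℕ} {p : n.Partition} {d₁ d₂ : ℕ} (h₁ : DB p d₁) (h₂ : DB p d₂) :
    d₁ = d₂ := by
  have key : ∀ e₁ e₂ : ℕ, DB p e₁ → DB p e₂ → e₁ < e₂ → False := by
    rintro e₁ e₂ ⟨_, _, hb⟩ ⟨_, hc, _⟩ hlt
    have h3 : Fc p e₂ ≤ Fc p (e₁ + 1) := Fc_anti p (by omega)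
    omega
  rcases Nat.lt_trichotomy d₁ d₂ with h | h | h
  · exact absurd (key d₁ d₂ h₁ h₂ h) (fun f => f.elim)
  · exact h
  · exact absurd (key d₂ d₁ h₂ h₁ h) (fun f => f.elim)

lemma mem_of_DA {n : ℕ} {p : n.Partition} {d : ℕ} (h : DA p d) : d ∈ p.parts := by
  obtain ⟨hd, h1, h2⟩ := h
  rw [← Multiset.count_pos]
  have := countP_nat_split p.parts d
  unfold Fc at h1 h2
  omega

/-! ### The bijections -/

/-- The forward map: remove the part `λ_d = d` (a fixed point) and add `d` parts equal to 1. -/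
noncomputable def phi {n : ℕ} (p : n.Partition) : n.Partition :=
  if h : ∃ d, DA p d then
    { parts := p.parts.erase (Nat.find h) + Multiset.replicate (Nat.find h) 1
      parts_pos := by
        intro i hi
        rcases Multiset.mem_add.mp hi with hi | hi
        · exact p.parts_pos (Multiset.mem_of_le (Multiset.erase_le _ _) hi)
        · rw [Multiset.eq_of_mem_replicate hi]; norm_num
      parts_sum := by
        have hmem : Nat.find h ∈ p.parts := mem_of_DA (Nat.find_spec h)
        have := Multiset.sum_erase hmem
        rw [Multiset.sum_add, Multiset.sum_replicate, smul_eq_mul, mul_one]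
        have hps := p.parts_sum
        omega }
  else p

/-- The backward map: remove `d` parts equal to 1 and add a part equal to `d`. -/
noncomputable def psi {n : ℕ} (p : n.Partition) : n.Partition :=
  if h : ∃ d, DB p d ∧ 2 ≤ d ∧ Multiset.replicate d 1 ≤ p.parts then
    { parts := (p.parts - Multiset.replicate (Nat.find h) 1) + {Nat.find h}
      parts_pos := by
        intro i hi
        rcases Multiset.mem_add.mp hi with hi | hi
        · exact p.parts_pos (Multiset.mem_of_le (tsub_le_self) hi)
        · rw [Multiset.mem_singleton.mp hi]; exact (Nat.find_spec h).1.1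
      parts_sum := by
        have hle : Multiset.replicate (Nat.find h) 1 ≤ p.parts := (Nat.find_spec h).2.2
        have hsplit : (p.parts - Multiset.replicate (Nat.find h) 1)
            + Multiset.replicate (Nat.find h) 1 = p.parts := tsub_add_cancel_of_le hle
        have := congrArg Multiset.sum hsplit
        rw [Multiset.sum_add, Multiset.sum_replicate, smul_eq_mul, mul_one] at this
        rw [Multiset.sum_add, Multiset.sum_singleton]
        rw [p.parts_sum] at this
        omega }
  else p

end FPNC

namespace FPNC

lemma countP_rep_zero {d j : ℕ} (hj : 2 ≤ j) :
    Multiset.countP (fun x => j ≤ x) (Multiset.replicate d 1) = 0 :=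
  Multiset.countP_eq_zero.mpr (fun a ha => by rw [Multiset.eq_of_mem_replicate ha]; omega)

lemma countP_phi_aux (s : Multiset ℕ) (d : ℕ) (hd : d ∈ s) {j : ℕ} (hj : 2 ≤ j) :
    Multiset.countP (fun x => j ≤ x) s
      = Multiset.countP (fun x => j ≤ x) (s.erase d + Multiset.replicate d 1)
        + (if j ≤ d then 1 else 0) := by
  rw [Multiset.countP_add, countP_rep_zero hj]
  conv_lhs => rw [← Multiset.cons_erase hd]
  rw [Multiset.countP_cons]
  omega

lemma countP_psi_aux (s : Multiset ℕ) (d : ℕ) (hle : Multiset.replicate d 1 ≤ s)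
    {j : ℕ} (hj : 2 ≤ j) :
    Multiset.countP (fun x => j ≤ x) ((s - Multiset.replicate d 1) + {d})
      = Multiset.countP (fun x => j ≤ x) s + (if j ≤ d then 1 else 0) := by
  conv_rhs => rw [← tsub_add_cancel_of_le hle]
  rw [Multiset.countP_add, Multiset.countP_add, countP_rep_zero hj]
  have : ({d} : Multiset ℕ) = d ::ₘ 0 := rfl
  rw [this, Multiset.countP_cons]
  simp

lemma phi_spec {n k : ℕ} (p : n.Partition) (hfix : hasFixedPoint p)
    (hb : betaStat p = k + 1) :
    crank (phi p) < 0 ∧ betaStat (phi p) = k ∧ psi (phi p) = p := by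
  have h : ∃ d, DA p d := by
    obtain ⟨d, h1, h2, h3⟩ := (hasFixedPoint_iff p).mp hfix
    exact ⟨d, h1, h2, h3⟩
  set d := Nat.find h with hddef
  have hd : DA p d := Nat.find_spec h
  have hmem : d ∈ p.parts := mem_of_DA hd
  obtain ⟨hd0, hdF, hdF'⟩ := hd
  have hb2 : Fc p 2 = k + 1 := by rw [← betaStat_eq_Fc]; exact hb
  have hd2 : 2 ≤ d := by
    by_contra hc
    have : Fc p 2 ≤ Fc p (d + 1) := Fc_anti p (by omega)
    omega
  have hphi : (phi p).parts = p.parts.erase d + Multiset.replicate d 1 := by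
    rw [phi, dif_pos h]
  have hF : ∀ j, 2 ≤ j → Fc p j = Fc (phi p) j + (if j ≤ d then 1 else 0) := by
    intro j hj
    rw [Fc, Fc, hphi]
    exact countP_phi_aux p.parts d hmem hj
  have hω : omegaStat (phi p) = omegaStat p + d := by
    rw [omegaStat, omegaStat, hphi, Multiset.count_add,
      Multiset.count_erase_of_ne (by omega), Multiset.count_replicate]
    simp
  have hβ : betaStat (phi p) = k := by
    have := hF 2 le_rfl
    rw [if_pos hd2] at this
    rw [betaStat_eq_Fc]
    omega
  have hμ : muStat (phi p) < omegaStat (phi p) := by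
    rw [muStat_eq_Fc, hω]
    have h1 := hF (omegaStat p + d + 1) (by omega)
    rw [if_neg (by omega)] at h1
    have h2 : Fc p (omegaStat p + d + 1) ≤ Fc p (d + 1) := Fc_anti p (by omega)
    omega
  have hcrank : crank (phi p) < 0 := by
    rw [crank_neg_iff]
    exact ⟨by omega, hμ⟩
  refine ⟨hcrank, hβ, ?_⟩
  have hDB : DB (phi p) d := by
    refine ⟨hd0, ?_, ?_⟩
    · have := hF d hd2
      rw [if_pos le_rfl] at this
      omega
    · have := hF (d + 1) (by omega)
      rw [if_neg (by omega)] at this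
      omega
  have hrep : Multiset.replicate d 1 ≤ (phi p).parts := by
    rw [← Multiset.le_count_iff_replicate_le]
    show d ≤ omegaStat (phi p)
    omega
  have h' : ∃ e, DB (phi p) e ∧ 2 ≤ e ∧ Multiset.replicate e 1 ≤ (phi p).parts :=
    ⟨d, hDB, hd2, hrep⟩
  have hfind : Nat.find h' = d := DB_unique (Nat.find_spec h').1 hDB
  apply Nat.Partition.ext
  rw [psi, dif_pos h']
  dsimp only
  rw [hfind, hphi, add_tsub_cancel_right, add_comm,
    Multiset.singleton_add, Multiset.cons_erase hmem]

lemma psi_spec {n k : ℕ} (hk : 0 < k) (q : n.Partition) (hcr : crank q < 0)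
    (hb : betaStat q = k) :
    hasFixedPoint (psi q) ∧ betaStat (psi q) = k + 1 ∧ phi (psi q) = q := by
  obtain ⟨hω0, hμ⟩ := (crank_neg_iff q).mp hcr
  have hb2 : Fc q 2 = k := by rw [← betaStat_eq_Fc]; exact hb
  have hμF : Fc q (omegaStat q + 1) < omegaStat q := by
    rw [← muStat_eq_Fc]; exact hμ
  -- construct d as the largest element of S
  set S : Set ℕ := {e | 0 < e ∧ e - 1 ≤ Fc q e} with hSdef
  have h2S : 2 ∈ S := ⟨by omega, by omega⟩
  have hbdd : Multiset.card q.parts + 1 ∈ upperBounds S := by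
    rintro e ⟨he0, he1⟩
    have := Fc_le_card q e
    omega
  set d := sSup S with hddef
  have hdS : d ∈ S := Nat.sSup_mem ⟨2, h2S⟩ ⟨_, hbdd⟩
  have hd2 : 2 ≤ d := le_csSup ⟨_, hbdd⟩ h2S
  have hnot : Fc q (d + 1) < d := by
    by_contra hc
    have hmem : d + 1 ∈ S := ⟨by omega, by omega⟩
    have := le_csSup ⟨_, hbdd⟩ hmem
    omega
  have hDB : DB q d := ⟨hdS.1, hdS.2, hnot⟩
  have hdω : d ≤ omegaStat q := by
    by_contra hc
    push_neg at hc
    have h1 : Fc q d ≤ Fc q (omegaStat q + 1) := Fc_anti q (by omega)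
    have h2 := hdS.2
    omega
  have hrep : Multiset.replicate d 1 ≤ q.parts := by
    rw [← Multiset.le_count_iff_replicate_le]
    exact hdω
  have h' : ∃ e, DB q e ∧ 2 ≤ e ∧ Multiset.replicate e 1 ≤ q.parts := ⟨d, hDB, hd2, hrep⟩
  have hfind : Nat.find h' = d := DB_unique (Nat.find_spec h').1 hDB
  have hpsi : (psi q).parts = (q.parts - Multiset.replicate d 1) + {d} := by
    rw [psi, dif_pos h']
    dsimp only
    rw [hfind]
  have hF : ∀ j, 2 ≤ j → Fc (psi q) j = Fc q j + (if j ≤ d then 1 else 0) := by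
    intro j hj
    rw [Fc, Fc, hpsi]
    exact countP_psi_aux q.parts d hrep hj
  have hDA : DA (psi q) d := by
    refine ⟨by omega, ?_, ?_⟩
    · have := hF d (by omega)
      rw [if_pos le_rfl] at this
      have h2 := hdS.2
      omega
    · have := hF (d + 1) (by omega)
      rw [if_neg (by omega)] at this
      omega
  have hfix : hasFixedPoint (psi q) := by
    rw [hasFixedPoint_iff]
    exact ⟨d, hDA.1, hDA.2.1, hDA.2.2⟩
  have hβ : betaStat (psi q) = k + 1 := by
    have := hF 2 le_rfl
    rw [if_pos hd2] at this
    rw [betaStat_eq_Fc, this, hb2]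
  refine ⟨hfix, hβ, ?_⟩
  have h'' : ∃ e, DA (psi q) e := ⟨d, hDA⟩
  have hfind2 : Nat.find h'' = d := DB_unique (Nat.find_spec h'').toDB hDA.toDB
  apply Nat.Partition.ext
  rw [phi, dif_pos h'']
  dsimp only
  rw [hfind2, hpsi, add_comm (q.parts - Multiset.replicate d 1),
    Multiset.singleton_add, Multiset.erase_cons_head, tsub_add_cancel_of_le hrep]

end FPNC

open FPNC in
theorem fixed_point_eq_neg_crank (n k : ℕ) (hn : 0 < n) (hk : 0 < k) :
    {p : Nat.Partition n | hasFixedPoint p ∧ betaStat p = k + 1}.ncard = {p : Nat.Partition n | crank p < 0 ∧ betaStat p = k}.ncard := by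
  set A := {p : Nat.Partition n | hasFixedPoint p ∧ betaStat p = k + 1} with hA
  set B := {p : Nat.Partition n | crank p < 0 ∧ betaStat p = k} with hB
  have himg : B = phi '' A := by
    ext q
    constructor
    · rintro ⟨h1, h2⟩
      obtain ⟨hfix, hβ, hinv⟩ := psi_spec hk q h1 h2
      exact ⟨psi q, ⟨hfix, hβ⟩, hinv⟩
    · rintro ⟨p, ⟨hfix, hβ⟩, rfl⟩
      obtain ⟨h1, h2, _⟩ := phi_spec p hfix hβ
      exact ⟨h1, h2⟩
  have hinj : Set.InjOn phi A := by
    rintro p₁ ⟨h1, h2⟩ p₂ ⟨h3, h4⟩ heq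
    have e1 := (phi_spec p₁ h1 h2).2.2
    have e2 := (phi_spec p₂ h3 h4).2.2
    rw [← e1, ← e2, heq]
  rw [himg, Set.ncard_image_of_injOn hinj]
end

section
/- If a partition λ of a positive integer n has a fixed point i (that is, λ_i = i) and the crank of λ is negative, then the number of parts of λ equal to 1 is at least i. -/
open scoped Classical
theorem fixed_point_neg_crank_many_ones (n : ℕ) (hn : 0 < n) (p : Nat.Partition n)
    (i : ℕ) (hi : 0 < i) (hil : i ≤ (sortedParts p).length)
    (hfix : (sortedParts p).getD (i - 1) 0 = i)
    (hcrank : crank p < 0) :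
    i ≤ omegaStat p := by
  by_contra hlt
  push_neg at hlt
  set l := sortedParts p with hldef
  have hsorted : l.Pairwise (· ≥ ·) := Multiset.pairwise_sort _ _
  rcases eq_or_ne (omegaStat p) 0 with h0 | h0
  · rw [crank, if_pos h0] at hcrank
    exact absurd hcrank (not_lt.2 (Int.natCast_nonneg _))
  · rw [crank, if_neg h0] at hcrank
    have hmu : muStat p < omegaStat p := by omega
    have hcast : p.parts = (l : Multiset ℕ) := (Multiset.sort_eq _ _).symm
    have hmu' : muStat p = (l.filter (fun x => decide (omegaStat p < x))).length := by
      rw [muStat, hcast]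
      simp [Multiset.filter_coe]
    have hi1 : i - 1 < l.length := by omega
    rw [List.getD_eq_getElem l 0 hi1] at hfix
    have hall : ∀ x ∈ l.take i, omegaStat p < x := by
      intro x hx
      rw [List.mem_take_iff_getElem] at hx
      obtain ⟨j, hj, rfl⟩ := hx
      have hj' : j < l.length := by simp at hj; omega
      have h2 : l.get ⟨j, hj'⟩ ≥ l.get ⟨i - 1, hi1⟩ :=
        hsorted.rel_get_of_le (by simp at hj ⊢; omega)
      simp only [List.get_eq_getElem] at h2
      omega
    have hsub : List.Sublist ((l.take i).filter (fun x => decide (omegaStat p < x)))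
        (l.filter (fun x => decide (omegaStat p < x))) := (List.take_sublist i l).filter _
    have heq : (l.take i).filter (fun x => decide (omegaStat p < x)) = l.take i := by
      rw [List.filter_eq_self]
      intro x hx; simpa using hall x hx
    have hlen := hsub.length_le
    rw [heq, List.length_take] at hlen
    omega
end

section
/- If a partition λ of a positive integer n has Durfee square size d, has negative crank, and has no fixed point, then the number of parts of λ equal to 1 is at least d + 1. -/
open scoped Classical

theorem no_fixed_point_neg_crank_many_ones (n : ℕ) (hn : 0 < n) (p : Nat.Partition n)
    (hcrank : crank p < 0) (hnofix : ¬ hasFixedPoint p) :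
    durfee p + 1 ≤ omegaStat p := by
  -- ω > 0
  have hω : 0 < omegaStat p := by
    by_contra h
    have h0 : omegaStat p = 0 := by omega
    rw [crank, if_pos h0] at hcrank
    exact absurd hcrank (by simp)
  set l := sortedParts p with hl
  have hsorted : l.Pairwise (· ≥ ·) := Multiset.pairwise_sort _ _
  set d := durfee p with hdd
  rcases Nat.eq_zero_or_pos d with hd0 | hd0
  · omega
  -- d is in the defining set
  have hmem : d ∈ {i : ℕ | 0 < i ∧ i ≤ l.length ∧ i ≤ l.getD (i - 1) 0} := by
    apply Nat.sSup_mem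
    · by_contra hne
      rw [Set.not_nonempty_iff_eq_empty] at hne
      have : d = 0 := by rw [hdd, durfee, ← hl, hne]; simp
      omega
    · exact ⟨l.length, fun i hi => hi.2.1⟩
  obtain ⟨hd1, hdlen, hdval⟩ := hmem
  -- no fixed point at d, so λ_d > d
  have hne : l.getD (d - 1) 0 ≠ d := fun h => hnofix ⟨d, hd1, hdlen, by rwa [← hl]⟩
  have hgt : d < l.getD (d - 1) 0 := lt_of_le_of_ne hdval (Ne.symm hne)
  -- suppose ω ≤ d for contradiction
  by_contra hcon
  have hωd : omegaStat p ≤ d := by omega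
  -- the first d entries of l are > ω
  have hidx : d - 1 < l.length := by omega
  have hbig : ∀ i (h : i < l.length), i < d → omegaStat p < l[i] := by
    intro i h hi
    have h1 : l[d-1] = l.getD (d-1) 0 := (List.getD_eq_getElem l 0 hidx).symm
    have h2 : l[d-1] ≤ l[i] := by
      rcases Nat.lt_or_ge i (d-1) with hlt | hge
      · exact List.Pairwise.rel_get_of_lt hsorted (by simpa using hlt)
      · have : i = d - 1 := by omega
        subst this; exact le_refl _
    omega
  -- μ ≥ d
  have hμ : d ≤ muStat p := by
    have hparts : p.parts = (↑l : Multiset ℕ) := (Multiset.sort_eq _ _).symm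
    have : muStat p = l.countP (fun x => decide (omegaStat p < x)) := by
      rw [muStat, hparts]
      simp [List.countP_eq_length_filter]
    rw [this]
    have hsplit : l.countP (fun x => decide (omegaStat p < x)) =
        (l.take d).countP (fun x => decide (omegaStat p < x)) +
        (l.drop d).countP (fun x => decide (omegaStat p < x)) := by
      conv_lhs => rw [← List.take_append_drop d l, List.countP_append]
    have htake : (l.take d).countP (fun x => decide (omegaStat p < x)) = d := by
      have hall : ∀ a ∈ l.take d, decide (omegaStat p < a) = true := by
        intro a ha
        obtain ⟨i, hi, rfl⟩ := List.getElem_of_mem ha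
        have hi' : i < d ∧ i < l.length := by
          have := hi; simp [List.length_take] at this; omega
        rw [List.getElem_take]
        simpa using hbig i hi'.2 hi'.1
      rw [List.countP_eq_length.mpr hall, List.length_take]
      omega
    omega
  -- crank < 0 gives μ < ω ≤ d ≤ μ
  rw [crank, if_neg (by omega)] at hcrank
  omega
end

section
/- There is no bijection φ from the set of partitions of 7 with negative crank to the set of partitions of 7 with positive crank such that for every partition λ with negative crank, β(φ(λ)) = β(λ) + 1 and the crank of φ(λ) equals the negative of the crank of λ. -/
open scoped Classical

theorem no_partition_crank2_beta2 (q : Nat.Partition 7) (hc : crank q = 2)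
    (hb : betaStat q = 2) : False := by
  unfold crank at hc
  split_ifs at hc with h0
  · have hsup : q.parts.sup = 2 := by exact_mod_cast hc
    have hall : ∀ x ∈ q.parts, 1 < x := by
      intro x hx
      have hpos := q.parts_pos hx
      rcases Nat.lt_or_ge x 2 with h | h
      · have hx1 : x = 1 := by omega
        subst hx1
        have := Multiset.count_pos.2 hx
        simp only [omegaStat] at h0
        omega
      · omega
    have hfilter : q.parts.filter (fun x => 1 < x) = q.parts :=
      Multiset.filter_eq_self.2 hall
    have hcard : Multiset.card q.parts = 2 := by
      rw [betaStat, hfilter] at hb; exact hb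
    have hle : q.parts.sum ≤ Multiset.card q.parts • q.parts.sup :=
      Multiset.sum_le_card_nsmul _ _ (fun x hx => Multiset.le_sup hx)
    rw [q.parts_sum, hcard, hsup] at hle
    simp at hle
  · have hω : 1 ≤ omegaStat q := Nat.one_le_iff_ne_zero.2 h0
    have hμ : muStat q = omegaStat q + 2 := by omega
    have hμ' : muStat q ≤ betaStat q := by
      apply Multiset.card_le_card
      apply Multiset.monotone_filter_right
      intro x hx
      omega
    omega

/-- The partition `4 + 1 + 1 + 1` of `7`. -/
def p411 : Nat.Partition 7 := ⟨{4, 1, 1, 1}, by decide, by decide⟩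

lemma crank_p411 : crank p411 = -2 := by decide

lemma beta_p411 : betaStat p411 = 1 := by decide

theorem no_crank_negating_bijection :
    ¬ ∃ φ : {p : Nat.Partition 7 // crank p < 0} → {p : Nat.Partition 7 // 0 < crank p},
      Function.Bijective φ ∧
      ∀ l : {p : Nat.Partition 7 // crank p < 0},
        betaStat (φ l).1 = betaStat l.1 + 1 ∧ crank (φ l).1 = - crank l.1 := by
  rintro ⟨φ, -, hprop⟩
  have hneg : crank p411 < 0 := by rw [crank_p411]; norm_num
  obtain ⟨hb, hc⟩ := hprop ⟨p411, hneg⟩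
  exact no_partition_crank2_beta2 _
    (by rw [hc, crank_p411]; ring) (by rw [hb, beta_p411])
end

section
/- It is not the case that for all positive integers n and all nonnegative integers k, the number of partitions of n with odd mex and exactly k parts greater than 1 equals the number of partitions of n with no fixed point and exactly k parts greater than 1; in particular, these counts differ for n = 5 and k = 2. -/
open scoped Classical

/-- The explicit partition (3,2) of 5. -/
def p32 : Nat.Partition 5 := ⟨{3, 2}, by decide, by decide⟩

lemma mex_p32 : mex p32 = 1 := by
  have h1 : (1 : ℕ) ∈ {m : ℕ | 0 < m ∧ m ∉ p32.parts} := by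
    constructor
    · norm_num
    · show (1 : ℕ) ∉ ({3, 2} : Multiset ℕ)
      decide
  have hle : mex p32 ≤ 1 := Nat.sInf_le h1
  have hmem : mex p32 ∈ {m : ℕ | 0 < m ∧ m ∉ p32.parts} := Nat.sInf_mem ⟨1, h1⟩
  have hpos : 0 < mex p32 := hmem.1
  omega

lemma beta_p32 : betaStat p32 = 2 := by decide

/-- Every partition of 5 with exactly two parts greater than 1 has a fixed point. -/
lemma fp_of_beta_two (p : Nat.Partition 5) (hb : betaStat p = 2) : hasFixedPoint p := by
  set L := sortedParts p with hL
  have hsum : L.sum = 5 := by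
    have : (L : Multiset ℕ) = p.parts := Multiset.sort_eq _ _
    have := congrArg Multiset.sum this
    simpa using this.trans p.parts_sum
  have hsorted : L.Pairwise (· ≥ ·) := Multiset.pairwise_sort _ _
  have hfilt : (L.filter (fun x => decide (1 < x))).length = 2 := by
    have : (L : Multiset ℕ) = p.parts := Multiset.sort_eq _ _
    have h2 := congrArg (fun m : Multiset ℕ => (m.filter (fun x => 1 < x)).card) this
    rw [← hb, betaStat, ← h2]
    simp [Multiset.filter_coe]
  match hLcases : L with
  | [] => simp [hLcases] at hfilt
  | [a] =>
    simp only [List.filter] at hfilt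
    by_cases h : 1 < a <;> simp [h] at hfilt
  | a :: b :: t =>
    have hab : a ≥ b := (List.pairwise_cons.mp hsorted).1 b (by simp)
    have hbt : ∀ x ∈ t, b ≥ x :=
      (List.pairwise_cons.mp (List.pairwise_cons.mp hsorted).2).1
    -- b ≥ 2 : otherwise at most one element > 1
    have hb2 : 2 ≤ b := by
      by_contra hcon
      push_neg at hcon
      have hbt1 : ∀ x ∈ b :: t, ¬ (1 < x) := by
        intro x hx
        rcases List.mem_cons.mp hx with rfl | hx
        · omega
        · have := hbt x hx; omega
      have : (b :: t).filter (fun x => decide (1 < x)) = [] := by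
        apply List.filter_eq_nil_iff.mpr
        intro x hx
        simpa using hbt1 x hx
      rw [List.filter_cons] at hfilt
      by_cases h : 1 < a <;> simp [h, this] at hfilt
    -- b ≤ 2 : since 2b ≤ a + b ≤ 5
    have hb2' : b ≤ 2 := by
      simp only [List.sum_cons] at hsum
      omega
    have hb : b = 2 := le_antisymm hb2' hb2
    refine ⟨2, by norm_num, ?_, ?_⟩
    · rw [← hL]; simp
    · rw [← hL]; simpa using hb

lemma rhs_empty :
    {p : Nat.Partition 5 | ¬ hasFixedPoint p ∧ betaStat p = 2} = ∅ := by
  ext p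
  simp only [Set.mem_setOf_eq, Set.mem_empty_iff_false, iff_false, not_and]
  intro hnfp hb
  exact hnfp (fp_of_beta_two p hb)

theorem odd_mex_ne_no_fixed_point_refined :
    (¬ ∀ (n k : ℕ), 0 < n →
      {p : Nat.Partition n | Odd (mex p) ∧ betaStat p = k}.ncard
        = {p : Nat.Partition n | ¬ hasFixedPoint p ∧ betaStat p = k}.ncard) ∧
    {p : Nat.Partition 5 | Odd (mex p) ∧ betaStat p = 2}.ncard
      ≠ {p : Nat.Partition 5 | ¬ hasFixedPoint p ∧ betaStat p = 2}.ncard := by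
  have hne : {p : Nat.Partition 5 | Odd (mex p) ∧ betaStat p = 2}.ncard
      ≠ {p : Nat.Partition 5 | ¬ hasFixedPoint p ∧ betaStat p = 2}.ncard := by
    rw [rhs_empty, Set.ncard_empty]
    have hmem : p32 ∈ {p : Nat.Partition 5 | Odd (mex p) ∧ betaStat p = 2} := by
      refine ⟨?_, beta_p32⟩
      rw [mex_p32]; exact odd_one
    have hfin : {p : Nat.Partition 5 | Odd (mex p) ∧ betaStat p = 2}.Finite :=
      Set.toFinite _
    have : 0 < {p : Nat.Partition 5 | Odd (mex p) ∧ betaStat p = 2}.ncard :=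
      (Set.ncard_pos hfin).mpr ⟨p32, hmem⟩
    omega
  exact ⟨fun h => hne (h 5 2 (by norm_num)), hne⟩
end
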